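/- Let n ≥ 3 be odd and let g be the n-cycle (1 2 ... n) in S_n, and g_n the partial permutation with domain {1,...,n-1} given by the (n-1)-cycle (1 2 ... n-1) restricted to {1,...,n-1}. Then every element of the set {g^r · g_n^{2k} · g^s : 0 ≤ r,s ≤ n-1, 0 ≤ k ≤ (n-3)/2} (products in the inverse monoid of partial permutations) has domain {1,...,n} \ {n−r} and image {1,...,n} \ {s}, where the subtraction n−r is interpreted with n−0 = n and s = 0 interpreted as n. -/

import Mathlib

/-- The partial permutation g_n of Fin n (0-indexed): domain {0,...,n-2}, sending
i ↦ i+1 for i ≤ n-3 and n-2 ↦ 0, undefined at n-1. -/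
def gPartial (n : ℕ) (a : Fin n) : Option (Fin n) :=
  if _h1 : (a : ℕ) + 1 = n then none
  else if h2 : (a : ℕ) + 2 = n then some ⟨0, by omega⟩
  else some ⟨(a : ℕ) + 1, by have := a.isLt; omega⟩

/-- Left-to-right composition of partial maps: x(αβ) = (xα)β. -/
def pcomp {n : ℕ} (f g : Fin n → Option (Fin n)) : Fin n → Option (Fin n) :=
  fun a => (f a).bind g

/-- Powers of a partial permutation in the inverse monoid; the 0th power is the
partial identity on the domain of f (the identity of the H-class of f). -/
def ppow {n : ℕ} (f : Fin n → Option (Fin n)) : ℕ → (Fin n → Option (Fin n))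
  | 0 => fun a => (f a).map (fun _ => a)
  | m + 1 => pcomp (ppow f m) f

lemma pow_finRotate (n : ℕ) (hn : 2 ≤ n) (m : ℕ) (x : Fin n) :
    ((((finRotate n) ^ m) x : Fin n) : ℕ) = ((x : ℕ) + m) % n := by
  induction m generalizing x with
  | zero => simp [Nat.mod_eq_of_lt x.isLt]
  | succ m ih =>
    rw [pow_succ, Equiv.Perm.mul_apply, ih]
    obtain ⟨p, rfl⟩ : ∃ p, n = p + 1 := ⟨n - 1, by omega⟩
    rw [finRotate_succ_apply, Fin.add_def]
    rw [Fin.val_one', Nat.mod_add_mod, Nat.mod_eq_of_lt (show 1 < p + 1 by omega)]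
    congr 1
    omega

lemma gPartial_apply (n : ℕ) (hn : 2 ≤ n) (v : ℕ) (hv : v < n - 1) :
    gPartial n ⟨v, by omega⟩ =
      some ⟨(v + 1) % (n - 1), by have := Nat.mod_lt (v+1) (y := n-1) (by omega); omega⟩ := by
  unfold gPartial
  simp only [Fin.val_mk]
  split_ifs with h1 h2
  · omega
  · exact congrArg some (Fin.ext (by simp only [Fin.val_mk]; rw [show v + 1 = n - 1 by omega, Nat.mod_self]))
  · exact congrArg some (Fin.ext (by simp only [Fin.val_mk]; rw [Nat.mod_eq_of_lt (show v + 1 < n - 1 by omega)]))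

lemma ppow_gPartial (n : ℕ) (hn : 2 ≤ n) (m : ℕ) (a : Fin n) :
    ppow (gPartial n) m a =
      if (a : ℕ) = n - 1 then none
      else some ⟨((a : ℕ) + m) % (n - 1), by
        have h := Nat.mod_lt ((a:ℕ)+m) (y := n-1) (by omega); omega⟩ := by
  have ha := a.isLt
  induction m with
  | zero =>
    simp only [ppow, gPartial]
    split_ifs with h1 h2 h3 <;> simp_all <;> try omega
    all_goals exact Fin.ext (by simp [Nat.mod_eq_of_lt (show (a:ℕ) < n - 1 by omega)])
  | succ m ih =>
    show pcomp (ppow (gPartial n) m) (gPartial n) a = _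
    unfold pcomp
    rw [ih]
    split_ifs with h1
    · rfl
    · rw [Option.bind_some,
        gPartial_apply n hn _ (Nat.mod_lt ((a:ℕ)+m) (y := n-1) (by omega))]
      exact congrArg some (Fin.ext (by simp [Nat.mod_add_mod, Nat.add_assoc]))

lemma mod2 (n x : ℕ) (hn : 0 < n) (hx : x < 2*n) :
    x % n = if x < n then x else x - n := by
  split_ifs with h
  · exact Nat.mod_eq_of_lt h
  · rw [Nat.mod_eq_sub_mod (by omega)]
    exact Nat.mod_eq_of_lt (by omega)

/-- For odd n ≥ 3, the element g^r · g_n^{2k} · g^s (0 ≤ r,s ≤ n-1, 0 ≤ k ≤ (n-3)/2)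
has domain Ω_n \ {n-r} and image Ω_n \ {s} (with n-0 = n and s = 0 read as n); in the
0-indexed setting the missing domain point is n-1-r and the missing image point is
(s + n - 1) % n. -/
theorem dom_im_of_g_gn_g (n r s k : ℕ) (h3 : 3 ≤ n) (hodd : Odd n)
    (hr : r ≤ n - 1) (hs : s ≤ n - 1) (hk : k ≤ (n - 3) / 2) :
    (∀ a : Fin n,
        (pcomp (pcomp (fun x => some (((finRotate n) ^ r) x)) (ppow (gPartial n) (2 * k)))
            (fun x => some (((finRotate n) ^ s) x)) a = none
          ↔ (a : ℕ) = n - 1 - r)) ∧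
    (∀ b : Fin n,
        ((∃ a : Fin n,
            pcomp (pcomp (fun x => some (((finRotate n) ^ r) x)) (ppow (gPartial n) (2 * k)))
              (fun x => some (((finRotate n) ^ s) x)) a = some b)
          ↔ (b : ℕ) ≠ (s + n - 1) % n)) := by
  have hn2 : 2 ≤ n := by omega
  have hn1 : 0 < n - 1 := by omega
  -- key computation of the composite
  have key : ∀ a : Fin n,
      pcomp (pcomp (fun x => some (((finRotate n) ^ r) x)) (ppow (gPartial n) (2 * k)))
        (fun x => some (((finRotate n) ^ s) x)) a =
      if ((a : ℕ) + r) % n = n - 1 then none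
      else some ⟨(((((a : ℕ) + r) % n) + 2 * k) % (n - 1) + s) % n,
        Nat.mod_lt _ (by omega)⟩ := by
    intro a
    unfold pcomp
    rw [Option.bind_some, ppow_gPartial n hn2]
    simp only [pow_finRotate n hn2 r a]
    split_ifs with h1
    · rfl
    · rw [Option.bind_some]
      congr 1
      apply Fin.ext
      rw [pow_finRotate n hn2 s]
  constructor
  · intro a
    rw [key a]
    have ha := a.isLt
    have hm : ((a:ℕ)+r) % n = (a:ℕ)+r ∨ ((a:ℕ)+r) % n + n = (a:ℕ)+r := by
      rw [mod2 n ((a:ℕ) + r) (by omega) (by omega)]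
      split_ifs with h <;> omega
    split_ifs with h1 <;> simp <;> omega
  · intro b
    have hb := b.isLt
    constructor
    · rintro ⟨a, hab⟩
      rw [key a] at hab
      have ha := a.isLt
      split_ifs at hab with h1
      have hval : (((((a : ℕ) + r) % n) + 2 * k) % (n - 1) + s) % n = (b : ℕ) := by
        have := congrArg (fun o => o.map Fin.val) hab
        simpa using this
      set y := ((((a : ℕ) + r) % n) + 2 * k) % (n - 1) with hy
      have hylt : y < n - 1 := Nat.mod_lt _ (by omega)
      have h1 : (y+s) % n = y+s ∨ (y+s) % n + n = y+s := by
        rw [mod2 n (y + s) (by omega) (by omega)]; split_ifs with h <;> omega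
      have h2 : (s+n-1) % n = s+n-1 ∨ (s+n-1) % n + n = s+n-1 := by
        rw [mod2 n (s + n - 1) (by omega) (by omega)]; split_ifs with h <;> omega
      intro hcon
      omega
    · intro hne
      -- construct preimage
      set t := (2 * k) % (n - 1) with ht
      have htlt : t < n - 1 := Nat.mod_lt _ (by omega)
      set y := ((b : ℕ) + n - s) % n with hy
      have hylt : y < n := Nat.mod_lt _ (by omega)
      have hys : (y + s) % n = (b : ℕ) := by
        rw [hy, Nat.mod_add_mod, show (b : ℕ) + n - s + s = (b : ℕ) + n by omega,
          Nat.add_mod_right, Nat.mod_eq_of_lt hb]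
      have hyne : y ≠ n - 1 := by
        intro h
        apply hne
        rw [← hys, h]
        congr 1
        omega
      set x := (y + (n - 1) - t) % (n - 1) with hx
      have hxlt : x < n - 1 := Nat.mod_lt _ (by omega)
      have hxy : (x + 2 * k) % (n - 1) = y := by
        rw [show (x + 2 * k) % (n-1) = (x + t) % (n-1) by rw [ht, Nat.add_mod_mod],
          hx, Nat.mod_add_mod, show y + (n - 1) - t + t = y + (n - 1) by omega,
          Nat.add_mod_right, Nat.mod_eq_of_lt (by omega)]
      refine ⟨⟨(x + n - r) % n, Nat.mod_lt _ (by omega)⟩, ?_⟩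
      rw [key]
      have har : (((x + n - r) % n : ℕ) + r) % n = x := by
        rw [Nat.mod_add_mod, show x + n - r + r = x + n by omega, Nat.add_mod_right,
          Nat.mod_eq_of_lt (by omega)]
      simp only [Fin.val_mk] at har ⊢
      rw [har]
      split_ifs with h1
      · omega
      · exact congrArg some (Fin.ext (by simp only [Fin.val_mk]; rw [hxy, hys]))
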